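/- Let n ≥ 2 and let N be a smooth and symmetric norm on ℝ^n. Let c > 0 be such that the vector v = (c, c, 0, …, 0) satisfies N(v) = 1. If f : ℝ^n → ℝ is a linear functional with f(v) = 1 and f(x) ≤ 1 for every x with N(x) ≤ 1 (i.e., f is a supporting functional of the unit ball at v), then f(x) = (x_1 + x_2)/(2c) for all x ∈ ℝ^n. -/

import Mathlib

/-- `N` is a norm on `ℝ^n`. -/
def IsNorm {n : ℕ} (N : (Fin n → ℝ) → ℝ) : Prop :=
  (∀ x, N x = 0 ↔ x = 0) ∧
  (∀ (c : ℝ) (x : Fin n → ℝ), N (c • x) = |c| * N x) ∧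
  (∀ x y : Fin n → ℝ, N (x + y) ≤ N x + N y)

/-- `N` is permutation-invariant. -/
def PermInvariant {n : ℕ} (N : (Fin n → ℝ) → ℝ) : Prop :=
  ∀ (σ : Equiv.Perm (Fin n)) (x : Fin n → ℝ), N (fun i => x (σ i)) = N x

/-- `N` is 1-unconditional. -/
def Unconditional {n : ℕ} (N : (Fin n → ℝ) → ℝ) : Prop :=
  ∀ ε : Fin n → ℝ, (∀ i, ε i = 1 ∨ ε i = -1) →
    ∀ x : Fin n → ℝ, N (fun i => ε i * x i) = N x

/-- `N` is smooth: at every point of the unit sphere there is exactly one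
supporting functional. -/
def SmoothNorm {n : ℕ} (N : (Fin n → ℝ) → ℝ) : Prop :=
  ∀ x : Fin n → ℝ, N x = 1 →
    ∃! f : (Fin n → ℝ) →ₗ[ℝ] ℝ, f x = 1 ∧ ∀ y : Fin n → ℝ, N y ≤ 1 → f y ≤ 1

/-- For a smooth and symmetric norm `N` on `ℝ^n` (`n ≥ 2`), if `v = (c, c, 0, …, 0)` has
norm one, then the supporting functional of the unit ball at `v` is
`x ↦ (x₁ + x₂)/(2c)`. -/
theorem supporting_functional_of_smooth_symmetric (n : ℕ) (hn : 2 ≤ n)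
    (N : (Fin n → ℝ) → ℝ) (hN : IsNorm N) (hperm : PermInvariant N)
    (huncond : Unconditional N) (hsmooth : SmoothNorm N)
    (c : ℝ) (hc : 0 < c)
    (hv : N (fun i => if (i : ℕ) < 2 then c else 0) = 1)
    (f : (Fin n → ℝ) →ₗ[ℝ] ℝ)
    (hfv : f (fun i => if (i : ℕ) < 2 then c else 0) = 1)
    (hfsupp : ∀ x : Fin n → ℝ, N x ≤ 1 → f x ≤ 1) :
    ∀ x : Fin n → ℝ, f x = (x ⟨0, by omega⟩ + x ⟨1, by omega⟩) / (2 * c) := by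
  obtain ⟨hzero, hsmul, htri⟩ := hN
  have h0 : (0 : ℕ) < n := by omega
  have h1 : (1 : ℕ) < n := by omega
  set i0 : Fin n := ⟨0, h0⟩ with hi0
  set i1 : Fin n := ⟨1, h1⟩ with hi1
  have hne : i0 ≠ i1 := by simp [hi0, hi1, Fin.ext_iff]
  set v : Fin n → ℝ := fun i => if (i : ℕ) < 2 then c else 0 with hvdef
  have hc2 : (0:ℝ) < 2 * c := by positivity
  set g : (Fin n → ℝ) →ₗ[ℝ] ℝ :=
    (2*c)⁻¹ • ((LinearMap.proj i0 : (Fin n → ℝ) →ₗ[ℝ] ℝ) + LinearMap.proj i1) with hgdef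
  have hgx : ∀ y : Fin n → ℝ, g y = (y i0 + y i1) / (2*c) := by
    intro y
    simp [hgdef, div_eq_inv_mul]; ring
  have hgv : g v = 1 := by
    rw [hgx]
    simp only [hvdef, hi0, hi1]
    norm_num
    field_simp
    ring
  have hgsupp : ∀ y : Fin n → ℝ, N y ≤ 1 → g y ≤ 1 := by
    intro y hy
    set σ : Equiv.Perm (Fin n) := Equiv.swap i0 i1 with hσ
    have hyσ : N (fun i => y (σ i)) = N y := hperm σ y
    set u : Fin n → ℝ := y + fun i => y (σ i) with hu
    have hNu : N u ≤ 2 := by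
      calc N u ≤ N y + N (fun i => y (σ i)) := htri _ _
        _ ≤ 2 := by rw [hyσ]; linarith
    set ε : Fin n → ℝ := fun i => if (i : ℕ) < 2 then 1 else -1 with hε
    have hεi : ∀ i, ε i = 1 ∨ ε i = -1 := by
      intro i; by_cases h : (i:ℕ) < 2 <;> simp [hε, h, -Order.lt_two_iff]
    have hNεu : N (fun i => ε i * u i) = N u := huncond ε hεi u
    set s : ℝ := y i0 + y i1 with hs
    have hwv : (fun i : Fin n => if (i : ℕ) < 2 then s else 0) = (s/c) • v := by
      funext i
      by_cases h : (i:ℕ) < 2 <;> simp [hvdef, h, -Order.lt_two_iff]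
      field_simp
    have hw : (fun i : Fin n => if (i : ℕ) < 2 then s else 0)
        = (2⁻¹ : ℝ) • (u + fun i => ε i * u i) := by
      funext i
      simp only [Pi.smul_apply, Pi.add_apply, smul_eq_mul]
      by_cases h : (i:ℕ) < 2
      · have hcase : i = i0 ∨ i = i1 := by
          have h2 : (i:ℕ) = 0 ∨ (i:ℕ) = 1 := by omega
          rcases h2 with h' | h'
          · left; exact Fin.ext h'
          · right; exact Fin.ext h'
        have hui : u i = s := by
          rcases hcase with rfl | rfl
          · simp [hu, hσ, hs]
          · simp [hu, hσ, hs]; ring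
        simp [h, hε, hui, -Order.lt_two_iff]; ring
      · simp [h, hε, -Order.lt_two_iff]
    have hNw : N (fun i : Fin n => if (i : ℕ) < 2 then s else 0) ≤ 2 := by
      rw [hw]
      calc N ((2⁻¹ : ℝ) • (u + fun i => ε i * u i))
          = |(2⁻¹ : ℝ)| * N (u + fun i => ε i * u i) := hsmul _ _
        _ ≤ |(2⁻¹ : ℝ)| * (N u + N (fun i => ε i * u i)) := by
            apply mul_le_mul_of_nonneg_left (htri _ _) (abs_nonneg _)
        _ ≤ 2 := by rw [hNεu]; rw [abs_of_pos (by norm_num : (0:ℝ) < 2⁻¹)]; linarith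
    have habs : |s/c| ≤ 2 := by
      have := hNw
      rw [hwv, hsmul, hv, mul_one] at this
      exact this
    have hsle : s ≤ 2 * c := by
      have h1 : s / c ≤ 2 := (abs_le.mp habs).2
      calc s = (s / c) * c := by field_simp
        _ ≤ 2 * c := mul_le_mul_of_nonneg_right h1 hc.le
    rw [hgx, div_le_one hc2]
    exact hsle
  obtain ⟨f₀, hf₀, huniq⟩ := hsmooth v hv
  have h1' : f = f₀ := huniq f ⟨hfv, hfsupp⟩
  have h2' : g = f₀ := huniq g ⟨hgv, hgsupp⟩
  intro x
  rw [h1', ← h2', hgx]
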